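/- arXiv:1301.7150 — 2 statements merged into one kernel-verified Lean document; each statement's English description precedes it below -/
import Mathlib

section
/- Let A > 0 and B < 0 be real constants with A² + 8B ≥ 0. Then there exists a twice differentiable function u : ℝ → ℝ, not identically zero, satisfying u''(t) = A·u(t)·u'(t) + B·u(t)³ for all t ∈ ℝ, which is bounded and satisfies u(t) → 0 and u'(t) → 0 as t → +∞ and as t → −∞. -/
open Real intervalIntegral MeasureTheory Filter Set

noncomputable def phiI (p s : ℝ) : ℝ := ∫ τ in (0:ℝ)..1, (1 + s^2*τ) ^ (-p)

noncomputable def phiI' (p s : ℝ) : ℝ :=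
  ∫ τ in (0:ℝ)..1, (2*s*τ) * (-p) * (1 + s^2*τ) ^ (-p-1)

lemma base_pos {s τ : ℝ} (hτ : 0 ≤ τ) : 0 < 1 + s^2*τ := by positivity

lemma uIoc01 : uIoc (0:ℝ) 1 = Ioc (0:ℝ) 1 := uIoc_of_le (by norm_num)

lemma uIcc01 : uIcc (0:ℝ) 1 = Icc (0:ℝ) 1 := uIcc_of_le (by norm_num)

lemma contOn_integrand (p s : ℝ) :
    ContinuousOn (fun τ : ℝ => (1 + s^2*τ) ^ (-p)) (Icc (0:ℝ) 1) := by
  apply ContinuousOn.rpow_const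
  · fun_prop
  · intro τ hτ
    exact Or.inl (ne_of_gt (base_pos hτ.1))

lemma integrable_integrand (p s : ℝ) :
    IntervalIntegrable (fun τ : ℝ => (1 + s^2*τ) ^ (-p)) volume 0 1 := by
  apply ContinuousOn.intervalIntegrable
  rw [uIcc01]; exact contOn_integrand p s

lemma contOn_integrand' (p s : ℝ) :
    ContinuousOn (fun τ : ℝ => (2*s*τ) * (-p) * (1 + s^2*τ) ^ (-p-1)) (Icc (0:ℝ) 1) := by
  apply ContinuousOn.mul
  · fun_prop
  · apply ContinuousOn.rpow_const
    · fun_prop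
    · intro τ hτ
      exact Or.inl (ne_of_gt (base_pos hτ.1))

lemma integrable_integrand' (p s : ℝ) :
    IntervalIntegrable (fun τ : ℝ => (2*s*τ) * (-p) * (1 + s^2*τ) ^ (-p-1)) volume 0 1 := by
  apply ContinuousOn.intervalIntegrable
  rw [uIcc01]; exact contOn_integrand' p s

lemma hasDerivAt_inner (p τ s : ℝ) (hτ : 0 ≤ τ) :
    HasDerivAt (fun x : ℝ => (1 + x^2*τ) ^ (-p)) ((2*s*τ) * (-p) * (1 + s^2*τ) ^ (-p-1)) s := by
  have h1 : HasDerivAt (fun x : ℝ => 1 + x^2*τ) (2*s*τ) s := by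
    have := ((hasDerivAt_pow 2 s).mul_const τ).const_add 1
    simpa [mul_comm, mul_assoc] using this
  have := h1.rpow_const (p := -p) (Or.inl (ne_of_gt (base_pos hτ)))
  simpa [mul_comm, mul_assoc, sub_eq_add_neg] using this

lemma hasDerivAt_phiI (p : ℝ) (hp : 0 ≤ p) (s : ℝ) :
    HasDerivAt (phiI p) (phiI' p s) s := by
  have key := intervalIntegral.hasDerivAt_integral_of_dominated_loc_of_deriv_le
    (F := fun x τ => (1 + x^2*τ) ^ (-p))
    (F' := fun x τ => (2*x*τ) * (-p) * (1 + x^2*τ) ^ (-p-1))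
    (x₀ := s) (bound := fun _ => 2*(|s|+1)*p) (a := 0) (b := 1) (s := Metric.ball s 1)
    (Metric.ball_mem_nhds s one_pos)
    (Eventually.of_forall fun x =>
      ((contOn_integrand p x).mono (by rw [uIoc01]; exact Ioc_subset_Icc_self)).aestronglyMeasurable
        measurableSet_uIoc)
    (integrable_integrand p s)
    (((contOn_integrand' p s).mono (by rw [uIoc01]; exact Ioc_subset_Icc_self)).aestronglyMeasurable
        measurableSet_uIoc)
    (Eventually.of_forall fun τ hτ x hx => by
      rw [uIoc01] at hτ
      have hτ0 : 0 ≤ τ := le_of_lt hτ.1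
      have hτ1 : τ ≤ 1 := hτ.2
      have hb : (1:ℝ) ≤ 1 + x^2*τ := by nlinarith [sq_nonneg x]
      have hr : (1 + x^2*τ) ^ (-p-1) ≤ 1 :=
        rpow_le_one_of_one_le_of_nonpos hb (by linarith)
      have hrpos : (0:ℝ) < (1 + x^2*τ) ^ (-p-1) := rpow_pos_of_pos (base_pos hτ0) _
      have hxb : |x| ≤ |s| + 1 := by
        have h1 := abs_sub_abs_le_abs_sub x s
        have hd : dist x s < 1 := Metric.mem_ball.mp hx
        rw [Real.dist_eq] at hd
        linarith
      have habs : ‖(2*x*τ) * (-p) * (1 + x^2*τ) ^ (-p-1)‖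
          = (2 * |x| * τ) * p * ((1 + x^2*τ) ^ (-p-1)) := by
        rw [Real.norm_eq_abs, abs_mul, abs_mul, abs_mul, abs_mul, abs_neg, abs_of_nonneg hp,
          abs_of_nonneg hτ0, abs_of_pos hrpos]
        norm_num
      rw [habs]
      calc (2 * |x| * τ) * p * ((1 + x^2*τ) ^ (-p-1))
          ≤ (2 * (|s|+1) * 1) * p * 1 := by
            apply mul_le_mul _ hr (le_of_lt hrpos) (by positivity)
            apply mul_le_mul_of_nonneg_right _ hp
            apply mul_le_mul (by linarith [abs_nonneg x]) hτ1 hτ0 (by positivity)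
        _ = 2*(|s|+1)*p := by ring)
    (by apply Continuous.intervalIntegrable; fun_prop)
    (Eventually.of_forall fun τ hτ x hx => by
      rw [uIoc01] at hτ
      exact hasDerivAt_inner p τ x (le_of_lt hτ.1))
  exact key.2

lemma phiI_le_one (p : ℝ) (hp : 0 ≤ p) (s : ℝ) : phiI p s ≤ 1 := by
  have h : phiI p s ≤ ∫ _ in (0:ℝ)..1, (1:ℝ) := by
    apply intervalIntegral.integral_mono_on (by norm_num) (integrable_integrand p s)
      (by apply Continuous.intervalIntegrable; fun_prop)
    intro τ hτ
    exact rpow_le_one_of_one_le_of_nonpos (by nlinarith [sq_nonneg s, hτ.1]) (by linarith)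
  simpa using h

lemma phiI_lb (p : ℝ) (hp : 0 ≤ p) (s : ℝ) : (1 + s^2) ^ (-p) ≤ phiI p s := by
  have h : ∫ _ in (0:ℝ)..1, (1 + s^2) ^ (-p) ≤ phiI p s := by
    apply intervalIntegral.integral_mono_on (by norm_num)
      (by apply Continuous.intervalIntegrable; fun_prop) (integrable_integrand p s)
    intro τ hτ
    apply rpow_le_rpow_of_nonpos (base_pos hτ.1) (by nlinarith [sq_nonneg s, hτ.2]) (by linarith)
  simpa using h

lemma phiI_pos (p : ℝ) (hp : 0 ≤ p) (s : ℝ) : 0 < phiI p s :=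
  lt_of_lt_of_le (rpow_pos_of_pos (by positivity) _) (phiI_lb p hp s)

/-- key identity: 2 φ(s) + s φ'(s) = 2 (1+s²)^(-p) -/
lemma phiI_identity (p : ℝ) (hp : 0 ≤ p) (s : ℝ) :
    2 * phiI p s + s * phiI' p s = 2 * (1 + s^2) ^ (-p) := by
  have h1 : (2:ℝ) * phiI p s = ∫ τ in (0:ℝ)..1, 2 * ((1 + s^2*τ) ^ (-p)) := by
    rw [phiI, intervalIntegral.integral_const_mul]
  have h2 : s * phiI' p s = ∫ τ in (0:ℝ)..1, s * ((2*s*τ) * (-p) * (1 + s^2*τ) ^ (-p-1)) := by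
    rw [phiI', intervalIntegral.integral_const_mul]
  rw [h1, h2, ← intervalIntegral.integral_add
    (by apply (integrable_integrand p s).const_mul)
    (by apply (integrable_integrand' p s).const_mul)]
  have key : ∀ τ ∈ uIcc (0:ℝ) 1,
      HasDerivAt (fun τ : ℝ => 2 * τ * ((1 + s^2*τ) ^ (-p)))
        (2 * ((1 + s^2*τ) ^ (-p)) + s * ((2*s*τ) * (-p) * (1 + s^2*τ) ^ (-p-1))) τ := by
    intro τ hτ
    rw [uIcc01] at hτ
    have hbase : (0:ℝ) < 1 + s^2*τ := base_pos hτ.1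
    have hin : HasDerivAt (fun τ : ℝ => 1 + s^2*τ) (s^2) τ := by
      simpa using (hasDerivAt_id τ).const_mul (s^2) |>.const_add 1
    have hrp := hin.rpow_const (p := -p) (Or.inl (ne_of_gt hbase))
    have hmul := ((hasDerivAt_id τ).const_mul 2).mul hrp
    refine hmul.congr_deriv ?_
    simp only [id_eq]
    ring
  have := intervalIntegral.integral_eq_sub_of_hasDerivAt key
    (by
      apply IntervalIntegrable.add
      · exact (integrable_integrand p s).const_mul 2
      · exact (integrable_integrand' p s).const_mul s)
  rw [this]
  norm_num

noncomputable def gI (p s : ℝ) : ℝ := Real.sqrt (phiI p s)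

lemma cont_phiI (p : ℝ) (hp : 0 ≤ p) : Continuous (phiI p) :=
  continuous_iff_continuousAt.mpr fun s => (hasDerivAt_phiI p hp s).continuousAt

lemma gI_pos (p : ℝ) (hp : 0 ≤ p) (s : ℝ) : 0 < gI p s :=
  Real.sqrt_pos.mpr (phiI_pos p hp s)

lemma gI_le_one (p : ℝ) (hp : 0 ≤ p) (s : ℝ) : gI p s ≤ 1 :=
  Real.sqrt_le_one.mpr (phiI_le_one p hp s)

lemma gI_sq (p : ℝ) (hp : 0 ≤ p) (s : ℝ) : gI p s ^ 2 = phiI p s :=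
  Real.sq_sqrt (le_of_lt (phiI_pos p hp s))

lemma cont_gI (p : ℝ) (hp : 0 ≤ p) : Continuous (gI p) := (cont_phiI p hp).sqrt

noncomputable def HI (p s : ℝ) : ℝ := ∫ σ in (0:ℝ)..s, 2 / gI p σ

lemma cont_hI (p : ℝ) (hp : 0 ≤ p) : Continuous (fun σ => 2 / gI p σ) :=
  Continuous.div continuous_const (cont_gI p hp) (fun s => ne_of_gt (gI_pos p hp s))

lemma hI_ge_two (p : ℝ) (hp : 0 ≤ p) (s : ℝ) : 2 ≤ 2 / gI p s := by
  rw [le_div_iff₀ (gI_pos p hp s)]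
  nlinarith [gI_le_one p hp s, gI_pos p hp s]

lemma hasDerivAt_HI (p : ℝ) (hp : 0 ≤ p) (s : ℝ) :
    HasDerivAt (HI p) (2 / gI p s) s := by
  apply intervalIntegral.integral_hasDerivAt_right
    ((cont_hI p hp).intervalIntegrable _ _)
    ((cont_hI p hp).stronglyMeasurableAtFilter _ _)
    (cont_hI p hp).continuousAt

lemma strictMono_HI (p : ℝ) (hp : 0 ≤ p) : StrictMono (HI p) := by
  apply strictMono_of_deriv_pos
  intro x
  rw [(hasDerivAt_HI p hp x).deriv]
  linarith [hI_ge_two p hp x]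

lemma HI_ge (p : ℝ) (hp : 0 ≤ p) {s : ℝ} (hs : 0 ≤ s) : 2 * s ≤ HI p s := by
  have : ∫ _ in (0:ℝ)..s, (2:ℝ) ≤ HI p s := by
    apply intervalIntegral.integral_mono_on hs (intervalIntegrable_const)
      ((cont_hI p hp).intervalIntegrable _ _)
    intro x _; exact hI_ge_two p hp x
  simpa [mul_comm] using this

lemma HI_le (p : ℝ) (hp : 0 ≤ p) {s : ℝ} (hs : s ≤ 0) : HI p s ≤ 2 * s := by
  have h1 : ∫ _ in s..(0:ℝ), (2:ℝ) ≤ ∫ σ in s..(0:ℝ), 2 / gI p σ := by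
    apply intervalIntegral.integral_mono_on hs (intervalIntegrable_const)
      ((cont_hI p hp).intervalIntegrable _ _)
    intro x _; exact hI_ge_two p hp x
  have h2 : HI p s = -∫ σ in s..(0:ℝ), 2 / gI p σ := by
    rw [HI, intervalIntegral.integral_symm]
  rw [h2]
  simp only [intervalIntegral.integral_const, smul_eq_mul] at h1
  linarith

lemma surjective_HI (p : ℝ) (hp : 0 ≤ p) : Function.Surjective (HI p) := by
  have hcont : Continuous (HI p) :=
    continuous_iff_continuousAt.mpr fun s => (hasDerivAt_HI p hp s).continuousAt
  apply hcont.surjective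
  · apply Filter.tendsto_atTop_mono' _ _ (Filter.tendsto_atTop_add_const_right _ 0
      (Filter.tendsto_id.const_mul_atTop (by norm_num : (0:ℝ) < 2)))
    filter_upwards [Filter.eventually_ge_atTop (0:ℝ)] with s hs
    simpa using HI_ge p hp hs
  · apply Filter.tendsto_atBot_mono' _ _
      (Filter.tendsto_id.const_mul_atBot (by norm_num : (0:ℝ) < 2))
    filter_upwards [Filter.eventually_le_atBot (0:ℝ)] with s hs
    simpa using HI_le p hp hs

lemma aux_q_atTop : Filter.Tendsto (fun x : ℝ => |x| / (1 + x^2)) Filter.atTop (nhds 0) := by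
  apply squeeze_zero' (g := fun x : ℝ => 1/x)
  · filter_upwards with x; positivity
  · filter_upwards [Filter.eventually_ge_atTop (1:ℝ)] with x hx
    rw [abs_of_nonneg (by linarith), div_le_div_iff₀ (by positivity) (by linarith)]
    nlinarith
  · simpa using tendsto_inv_atTop_zero

lemma aux_q_atBot : Filter.Tendsto (fun x : ℝ => |x| / (1 + x^2)) Filter.atBot (nhds 0) := by
  have h := aux_q_atTop.comp tendsto_neg_atBot_atTop
  convert h using 2 with x
  simp [Function.comp]

set_option maxHeartbeats 2000000 in
lemma main_construction (A B p cc : ℝ) (hp : 1 ≤ p) (hc : cc ≠ 0)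
    (hAc : -p - 3 = A * cc) (hBc : B * cc^2 - A * cc - 2 = 0) :
    ∃ u : ℝ → ℝ, Differentiable ℝ u ∧ Differentiable ℝ (deriv u) ∧
      (∀ t, deriv (deriv u) t = A * u t * deriv u t + B * (u t) ^ 3) ∧
      (∃ t, u t ≠ 0) ∧
      (∃ M : ℝ, ∀ t, |u t| ≤ M) ∧
      Filter.Tendsto u Filter.atTop (nhds 0) ∧
      Filter.Tendsto u Filter.atBot (nhds 0) ∧
      Filter.Tendsto (deriv u) Filter.atTop (nhds 0) ∧
      Filter.Tendsto (deriv u) Filter.atBot (nhds 0) := by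
  have hp0 : (0:ℝ) ≤ p := by linarith
  set e : ℝ ≃o ℝ :=
    StrictMono.orderIsoOfSurjective (HI p) (strictMono_HI p hp0) (surjective_HI p hp0) with he
  set S : ℝ → ℝ := fun t => e.symm t with hSdef
  have hcoe : ∀ s, e s = HI p s := fun s => rfl
  have hHS : ∀ t, HI p (S t) = t := fun t => e.apply_symm_apply t
  have hScont : Continuous S := (OrderIso.continuous e.symm)
  have hS' : ∀ t, HasDerivAt S (gI p (S t) / 2) t := by
    intro t
    have h := HasDerivAt.of_local_left_inverse (f := HI p) (g := S) (a := t)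
      hScont.continuousAt (hasDerivAt_HI p hp0 (S t))
      ((div_pos two_pos (gI_pos p hp0 (S t))).ne')
      (Filter.Eventually.of_forall hHS)
    refine h.congr_deriv ?_
    rw [inv_div]
  -- the building blocks
  set W : ℝ → ℝ := fun t => 1 + (S t)^2 with hWdef
  set W1 : ℝ → ℝ := fun t => S t * gI p (S t) with hW1def
  set W2 : ℝ → ℝ := fun t => (1/2) * (W t) ^ (-p) with hW2def
  set W3 : ℝ → ℝ := fun t => (1/2) * (W1 t * (-p) * (W t) ^ (-p-1)) with hW3def
  have hWpos : ∀ t, 0 < W t := fun t => by positivity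
  have hWne : ∀ t, W t ≠ 0 := fun t => ne_of_gt (hWpos t)
  have hW1le : ∀ t, 1 ≤ W t := fun t => by
    simp only [hWdef]; nlinarith [sq_nonneg (S t)]
  -- derivative of W
  have hW : ∀ t, HasDerivAt W (W1 t) t := by
    intro t
    have h := ((hS' t).pow 2).const_add 1
    refine h.congr_deriv ?_
    simp only [hW1def]
    ring
  -- derivative of gI ∘ S
  have hgS : ∀ t, HasDerivAt (fun t => gI p (S t))
      (phiI' p (S t) / (2 * gI p (S t)) * (gI p (S t) / 2)) t := by
    intro t
    have hsq := Real.hasDerivAt_sqrt (ne_of_gt (phiI_pos p hp0 (S t)))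
    have hphi := hasDerivAt_phiI p hp0 (S t)
    have hcomp := (hsq.comp (S t) hphi).comp t (hS' t)
    have hval : (1 / (2 * Real.sqrt (phiI p (S t))) * phiI' p (S t)) * (gI p (S t) / 2)
        = phiI' p (S t) / (2 * gI p (S t)) * (gI p (S t) / 2) := by
      rw [gI]; ring
    exact hval ▸ hcomp
  -- derivative of W1
  have hW1 : ∀ t, HasDerivAt W1 (W2 t) t := by
    intro t
    have hprod := (hS' t).mul (hgS t)
    have hval : gI p (S t) / 2 * gI p (S t)
        + S t * (phiI' p (S t) / (2 * gI p (S t)) * (gI p (S t) / 2)) = W2 t := by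
      have hgne : gI p (S t) ≠ 0 := ne_of_gt (gI_pos p hp0 (S t))
      have h1 := gI_sq p hp0 (S t)
      have hid := phiI_identity p hp0 (S t)
      have hsimp : phiI' p (S t) / (2 * gI p (S t)) * (gI p (S t) / 2)
          = phiI' p (S t) / 4 := by
        field_simp; ring
      rw [hsimp]
      simp only [hW2def, hWdef]
      linear_combination (1/2) * h1 + (1/4) * hid
    rw [← hval]
    exact hprod
  -- derivative of W2
  have hW2 : ∀ t, HasDerivAt W2 (W3 t) t := by
    intro t
    have h := ((hW t).rpow_const (p := -p) (Or.inl (hWne t))).const_mul (1/2)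
    exact h
  -- the solution u
  set u : ℝ → ℝ := fun t => cc * W1 t / W t with hudef
  set U1 : ℝ → ℝ := fun t => cc * (W2 t * W t - W1 t^2) / (W t)^2 with hU1def
  have hu : ∀ t, HasDerivAt u (U1 t) t := by
    intro t
    have h := ((hW1 t).const_mul cc).div (hW t) (hWne t)
    refine h.congr_deriv ?_
    simp only [hU1def]
    ring
  have hu' : ∀ t, HasDerivAt U1 (A * u t * U1 t + B * (u t)^3) t := by
    intro t
    have hnum : HasDerivAt (fun t => cc * (W2 t * W t - W1 t^2))
        (cc * (W3 t * W t + W2 t * W1 t - 2 * W1 t * W2 t)) t := by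
      have h := (((hW2 t).mul (hW t)).sub ((hW1 t).pow 2)).const_mul cc
      refine h.congr_deriv ?_
      ring
    have hden : HasDerivAt (fun t => (W t)^2) (2 * W t * W1 t) t := by
      have h := (hW t).pow 2
      refine h.congr_deriv ?_
      ring
    have h := hnum.div hden (by positivity)
    refine h.congr_deriv ?_
    have hX : W t ^ (-p-1) = W t ^ (-p) / W t := by
      rw [show -p-1 = -p + (-1) by ring, Real.rpow_add (hWpos t), Real.rpow_neg_one]
      ring
    have hA : A = (-p-3)/cc := by rw [eq_div_iff hc]; linarith
    have hB : B = (-p-1)/cc^2 := by rw [eq_div_iff (pow_ne_zero 2 hc)]; linarith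
    simp only [hudef, hU1def, hW3def, hW2def]
    rw [hX, hA, hB]
    generalize hb : W1 t = b
    generalize hgen : W t = w
    have hwne : w ≠ 0 := hgen ▸ hWne t
    generalize hy : w ^ (-p) = y
    field_simp
    ring
  -- assembly
  have hderiv : deriv u = U1 := funext fun t => (hu t).deriv
  have habs_u : ∀ t, |u t| = |cc| * (|S t| * gI p (S t)) / W t := by
    intro t
    simp only [hudef, hW1def]
    rw [abs_div, abs_of_pos (hWpos t), abs_mul, abs_mul,
      abs_of_pos (gI_pos p hp0 (S t))]
  have hSabs : ∀ t, |S t| ≤ 1 + (S t)^2 := by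
    intro t
    nlinarith [sq_nonneg (|S t| - 1), sq_abs (S t)]
  have hu_bound : ∀ t, |u t| ≤ |cc| * (|S t| / (1 + (S t)^2)) := by
    intro t
    rw [habs_u t]
    rw [div_le_iff₀ (hWpos t)]
    have hg1 := gI_le_one p hp0 (S t)
    have hg0 := gI_pos p hp0 (S t)
    have : |cc| * (|S t| / (1 + (S t)^2)) * W t = |cc| * |S t| := by
      simp only [hWdef]
      field_simp
    rw [this]
    have : |S t| * gI p (S t) ≤ |S t| := by
      nlinarith [abs_nonneg (S t)]
    nlinarith [abs_nonneg cc, abs_nonneg (S t)]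
  have hSt : Filter.Tendsto S Filter.atTop Filter.atTop := e.symm.tendsto_atTop
  have hSb : Filter.Tendsto S Filter.atBot Filter.atBot := e.symm.tendsto_atBot
  have hWt_top : Filter.Tendsto W Filter.atTop Filter.atTop := by
    have h1 : Filter.Tendsto (fun t => S t * S t) Filter.atTop Filter.atTop :=
      hSt.atTop_mul_atTop₀ hSt
    have h2 : Filter.Tendsto (fun t => 1 + S t * S t) Filter.atTop Filter.atTop :=
      Filter.tendsto_atTop_add_const_left _ 1 h1
    convert h2 using 2 with t
    simp only [hWdef]; ring
  have hWb_top : Filter.Tendsto W Filter.atBot Filter.atTop := by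
    have h1 : Filter.Tendsto (fun t => S t * S t) Filter.atBot Filter.atTop :=
      hSb.atBot_mul_atBot₀ hSb
    have h2 : Filter.Tendsto (fun t => 1 + S t * S t) Filter.atBot Filter.atTop :=
      Filter.tendsto_atTop_add_const_left _ 1 h1
    convert h2 using 2 with t
    simp only [hWdef]; ring
  have hU1_bound : ∀ t, |U1 t| ≤ 2 * |cc| / W t := by
    intro t
    have hW2pos : 0 < W2 t := by
      simp only [hW2def]
      positivity
    have hW2W : W2 t * W t ≤ 1/2 := by
      have h1 : (W t) ^ (-p) ≤ (W t) ^ (-1 : ℝ) :=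
        Real.rpow_le_rpow_of_exponent_le (hW1le t) (by linarith)
      rw [Real.rpow_neg_one] at h1
      have h2 : W2 t ≤ 1/2 * (W t)⁻¹ := by
        simp only [hW2def]
        nlinarith
      calc W2 t * W t ≤ (1/2 * (W t)⁻¹) * W t :=
            mul_le_mul_of_nonneg_right h2 (le_of_lt (hWpos t))
        _ = 1/2 := by field_simp [mul_comm]; exact div_self (hWne t)
    have hW1sq : W1 t ^ 2 ≤ W t := by
      simp only [hW1def, hWdef]
      have hg1 := gI_le_one p hp0 (S t)
      have hg0 := gI_pos p hp0 (S t)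
      have hgsq : gI p (S t)^2 ≤ 1 := by nlinarith
      have := mul_le_mul_of_nonneg_left hgsq (sq_nonneg (S t))
      nlinarith [sq_nonneg (S t)]
    have h3 : |U1 t| ≤ |cc| * (W2 t * W t + W1 t ^2) / (W t)^2 := by
      simp only [hU1def]
      rw [abs_div, abs_of_pos (by positivity : (0:ℝ) < (W t)^2), abs_mul]
      gcongr
      rw [abs_sub_le_iff]
      constructor <;>
        linarith [sq_nonneg (W1 t), le_of_lt (mul_pos hW2pos (hWpos t))]
    have h4 : |cc| * (W2 t * W t + W1 t ^2) / (W t)^2 ≤ 2 * |cc| / W t := by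
      rw [div_le_div_iff₀ (by positivity) (hWpos t)]
      have hWge := hW1le t
      have h5 : W2 t * W t + W1 t ^2 ≤ 2 * W t := by nlinarith
      have h6 := mul_le_mul_of_nonneg_right
        (mul_le_mul_of_nonneg_left h5 (abs_nonneg cc)) (le_of_lt (hWpos t))
      nlinarith [h6]
    linarith
  have htendW : Filter.Tendsto (fun t => 2 * |cc| / W t) Filter.atTop (nhds 0) :=
    Filter.Tendsto.div_atTop tendsto_const_nhds hWt_top
  have htendWb : Filter.Tendsto (fun t => 2 * |cc| / W t) Filter.atBot (nhds 0) :=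
    Filter.Tendsto.div_atTop tendsto_const_nhds hWb_top
  refine ⟨u, fun t => (hu t).differentiableAt, ?_, ?_, ?_, ⟨|cc|, ?_⟩, ?_, ?_, ?_, ?_⟩
  · rw [hderiv]
    exact fun t => (hu' t).differentiableAt
  · intro t
    rw [hderiv, (hu' t).deriv]
  · refine ⟨HI p 1, ?_⟩
    have hS1 : S (HI p 1) = 1 := by
      show e.symm (HI p 1) = 1
      rw [← hcoe 1]
      exact e.symm_apply_apply 1
    simp only [hudef, hW1def, hWdef, hS1]
    have hg := gI_pos p hp0 1
    apply div_ne_zero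
    · exact mul_ne_zero hc (by nlinarith)
    · norm_num
  · intro t
    calc |u t| ≤ |cc| * (|S t| / (1 + (S t)^2)) := hu_bound t
      _ ≤ |cc| * 1 := by
          apply mul_le_mul_of_nonneg_left _ (abs_nonneg cc)
          rw [div_le_one (by positivity)]
          exact hSabs t
      _ = |cc| := mul_one _
  · apply squeeze_zero_norm hu_bound
    have h := (aux_q_atTop.comp hSt).const_mul |cc|
    simpa using h
  · apply squeeze_zero_norm hu_bound
    have h := (aux_q_atBot.comp hSb).const_mul |cc|
    simpa using h
  · rw [hderiv]
    exact squeeze_zero_norm hU1_bound htendW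
  · rw [hderiv]
    exact squeeze_zero_norm hU1_bound htendWb

/-- A > 0, B < 0, A² + 8B ≥ 0: existence of a non-trivial bounded global
solution of u'' = A u u' + B u³ tending to 0 (with its derivative)
at both ±∞. -/
theorem stmt_17 (A B : ℝ) (hA : 0 < A) (hB : B < 0) (hdisc : 0 ≤ A ^ 2 + 8 * B) :
    ∃ u : ℝ → ℝ, Differentiable ℝ u ∧ Differentiable ℝ (deriv u) ∧
      (∀ t, deriv (deriv u) t = A * u t * deriv u t + B * (u t) ^ 3) ∧
      (∃ t, u t ≠ 0) ∧
      (∃ M : ℝ, ∀ t, |u t| ≤ M) ∧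
      Filter.Tendsto u Filter.atTop (nhds 0) ∧
      Filter.Tendsto u Filter.atBot (nhds 0) ∧
      Filter.Tendsto (deriv u) Filter.atTop (nhds 0) ∧
      Filter.Tendsto (deriv u) Filter.atBot (nhds 0) := by
  set D : ℝ := Real.sqrt (A^2 + 8*B) with hDdef
  have hD2 : D^2 = A^2 + 8*B := Real.sq_sqrt hdisc
  have hD0 : 0 ≤ D := Real.sqrt_nonneg _
  have hBne : B ≠ 0 := ne_of_lt hB
  set cc : ℝ := (A + D) / (2*B) with hccdef
  have hccB : cc * (2*B) = A + D := by
    rw [hccdef]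
    field_simp
  have hcc_neg : cc < 0 := div_neg_of_pos_of_neg (by positivity) (by linarith)
  have hc : cc ≠ 0 := ne_of_lt hcc_neg
  have hBc : B * cc^2 - A * cc - 2 = 0 := by
    have h : (cc * (2*B))^2 = (A + D)^2 := by rw [hccB]
    have hkey : (A+D)^2 - 2*A*(A+D) - 8*B = 0 := by linear_combination hD2
    nlinarith [h, hkey]
  set p : ℝ := -3 - A * cc with hpdef
  have hp : 1 ≤ p := by
    have k1 : (-3 - A*cc - 1) * (-2*B) = D^2 + A*D := by
      linear_combination A * hccB - hD2
    rw [hpdef]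
    nlinarith [k1, sq_nonneg D, mul_nonneg hA.le hD0, hB]
  exact main_construction A B p cc hp hc (by rw [hpdef]; ring) hBc
end

section
/- Let A > 0 and B < 0 be real constants with A² + 8B ≥ 0. If u : ℝ → ℝ is a twice differentiable function satisfying u''(t) = A·u(t)·u'(t) + B·u(t)³ for all t ∈ ℝ and u is periodic (i.e. there exists p > 0 with u(t + p) = u(t) for all t), then u is identically zero. In particular, the ODE admits no non-trivial periodic solutions. -/
open Set Filter Function Topology intervalIntegral

/-- A > 0, B < 0, A² + 8B ≥ 0: every periodic global solution of
u'' = A u u' + B u³ is identically zero. -/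
theorem stmt_18 (A B : ℝ) (hA : 0 < A) (hB : B < 0) (hdisc : 0 ≤ A ^ 2 + 8 * B)
    (u : ℝ → ℝ) (hu : Differentiable ℝ u) (hu' : Differentiable ℝ (deriv u))
    (hode : ∀ t, deriv (deriv u) t = A * u t * deriv u t + B * (u t) ^ 3)
    (hper : ∃ p : ℝ, 0 < p ∧ ∀ t, u (t + p) = u t) :
    ∀ t, u t = 0 := by
  obtain ⟨p, hp, hperiod⟩ := hper
  have hPer : Function.Periodic u p := hperiod
  have hcu : Continuous u := hu.continuous
  have hcu' : Continuous (deriv u) := hu'.continuous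
  set D := Real.sqrt (A ^ 2 + 8 * B) with hD
  have hD2 : D ^ 2 = A ^ 2 + 8 * B := Real.sq_sqrt hdisc
  have hD0 : 0 ≤ D := Real.sqrt_nonneg _
  have hDA : D < A := by nlinarith
  set k := (A - D) / 4 with hk
  have hk0 : 0 < k := by rw [hk]; linarith
  have hA2k : 0 < A - 2 * k := by rw [hk]; nlinarith
  have hkB : B = 2 * k ^ 2 - A * k := by rw [hk]; nlinarith
  set w := fun t => deriv u t - k * (u t) ^ 2 with hw
  -- w satisfies the linear ODE w' = (A - 2k) u w
  have hwD : ∀ t, HasDerivAt w ((A - 2 * k) * u t * w t) t := by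
    intro t
    have h1 : HasDerivAt u (deriv u t) t := (hu t).hasDerivAt
    have h2 : HasDerivAt (deriv u) (deriv (deriv u) t) t := (hu' t).hasDerivAt
    have h3 : HasDerivAt (fun s => k * (u s) ^ 2)
        (k * ((2 : ℕ) * u t ^ 1 * deriv u t)) t := (h1.pow 2).const_mul k
    have h4 : HasDerivAt w (deriv (deriv u) t - k * ((2 : ℕ) * u t ^ 1 * deriv u t)) t := h2.sub h3
    convert h4 using 1
    rw [hode t, hw]
    push_cast
    linear_combination (-(u t) ^ 3) * hkB
  -- the integrating factor
  set C : ℝ → ℝ := fun t => ∫ s in (0:ℝ)..t, (A - 2 * k) * u s with hC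
  have hcC : Continuous (fun s => (A - 2 * k) * u s) := continuous_const.mul hcu
  have hCD : ∀ t, HasDerivAt C ((A - 2 * k) * u t) t := by
    intro t
    exact intervalIntegral.integral_hasDerivAt_right (hcC.intervalIntegrable _ _)
      (hcC.stronglyMeasurable.stronglyMeasurableAtFilter) hcC.continuousAt
  have hwval : ∀ t, w t = w 0 * Real.exp (C t) := by
    have hg : ∀ t, HasDerivAt (fun s => w s * Real.exp (-(C s))) 0 t := by
      intro t
      have h1 : HasDerivAt (fun s => Real.exp (-(C s)))
          (Real.exp (-(C t)) * -((A - 2 * k) * u t)) t := ((hCD t).neg).exp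
      have : HasDerivAt (fun s => w s * Real.exp (-(C s))) ((A - 2 * k) * u t * w t * Real.exp (-(C t)) + w t * (Real.exp (-(C t)) * -((A - 2 * k) * u t))) t := (hwD t).mul h1
      convert this using 1
      ring
    have hgc : ∀ t, (fun s => w s * Real.exp (-(C s))) t
        = (fun s => w s * Real.exp (-(C s))) 0 := by
      intro t
      exact is_const_of_deriv_eq_zero (fun x => (hg x).differentiableAt)
        (fun x => (hg x).deriv) t 0
    intro t
    have h0 : C 0 = 0 := intervalIntegral.integral_same
    have h := hgc t
    simp only [h0, neg_zero, Real.exp_zero, mul_one] at h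
    rw [Real.exp_neg] at h
    field_simp at h
    linarith [h]
  rcases lt_trichotomy (w 0) 0 with hw0 | hw0 | hw0
  · -- main case: w < 0 everywhere
    have hwneg : ∀ t, w t < 0 := fun t => by
      rw [hwval t]; exact mul_neg_of_neg_of_pos hw0 (Real.exp_pos _)
    -- deriv u is periodic
    have hdp : ∀ t, deriv u (t + p) = deriv u t := by
      intro t
      have h : (fun x => u (x + p)) = u := funext hperiod
      rw [← deriv_comp_add_const u p t, h]
    have hup : u p = u 0 := by simpa using hperiod 0
    have hup' : deriv u p = deriv u 0 := by simpa using hdp 0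
    have hwp : w p = w 0 := by simp [hw, hup, hup']
    have hCp : C p = 0 := by
      have h := (hwval p).symm
      rw [hwp] at h
      nth_rewrite 2 [show w 0 = w 0 * 1 by ring] at h
      have h1 : Real.exp (C p) = 1 := mul_left_cancel₀ (ne_of_lt hw0) h
      simpa using h1
    have hint : (∫ t in (0:ℝ)..p, u t) = 0 := by
      have h : (A - 2 * k) * ∫ t in (0:ℝ)..p, u t = 0 := by
        rw [← intervalIntegral.integral_const_mul]; exact hCp
      exact (mul_eq_zero.mp h).resolve_left (ne_of_gt hA2k)
    -- now show u ≡ 0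
    intro t
    by_contra ht1
    set c : ℝ := t - ⌊t / p⌋ * p with hc
    have hcmem : c ∈ Icc (0:ℝ) p := ⟨Int.sub_floor_div_mul_nonneg t hp,
      le_of_lt (Int.sub_floor_div_mul_lt t hp)⟩
    have hcval : u c = u t := hPer.sub_int_mul_eq ⌊t / p⌋
    have hpos : ∃ s, 0 < u s := by
      by_contra h
      push_neg at h
      have hlt : (∫ x in (0:ℝ)..p, u x) < ∫ x in (0:ℝ)..p, (0:ℝ) := by
        apply intervalIntegral.integral_lt_integral_of_continuousOn_of_le_of_exists_lt hp
          hcu.continuousOn continuousOn_const (fun x _ => h x)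
        exact ⟨c, hcmem, by rw [hcval]; exact lt_of_le_of_ne (h t) ht1⟩
      simp [hint] at hlt
    have hneg : ∃ s, u s < 0 := by
      by_contra h
      push_neg at h
      have hlt : (∫ x in (0:ℝ)..p, (0:ℝ)) < ∫ x in (0:ℝ)..p, u x := by
        apply intervalIntegral.integral_lt_integral_of_continuousOn_of_le_of_exists_lt hp
          continuousOn_const hcu.continuousOn (fun x _ => h x)
        exact ⟨c, hcmem, by rw [hcval]; exact lt_of_le_of_ne (h t) (Ne.symm ht1)⟩
      simp [hint] at hlt
    obtain ⟨a, ha⟩ := hneg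
    obtain ⟨b, hb⟩ := hpos
    obtain ⟨n, hn⟩ := exists_nat_gt ((a - b) / p)
    set b' : ℝ := b + n * p with hb'
    have hb'val : u b' = u b := (hPer.nat_mul n) b
    have hab : a < b' := by
      rw [div_lt_iff₀ hp] at hn
      rw [hb']; linarith
    -- last zero before b'
    set S : Set ℝ := Icc a b' ∩ u ⁻¹' {0} with hS
    have hScompact : IsCompact S :=
      isCompact_Icc.inter_right (isClosed_singleton.preimage hcu)
    have hSne : S.Nonempty := by
      have h01 : (0:ℝ) ∈ Icc (u a) (u b') := ⟨le_of_lt ha, by rw [hb'val]; exact le_of_lt hb⟩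
      obtain ⟨z, hz, hz0⟩ := intermediate_value_Icc (le_of_lt hab) hcu.continuousOn h01
      exact ⟨z, hz, hz0⟩
    obtain ⟨t₀, ht₀S, ht₀max⟩ := hScompact.exists_isGreatest hSne
    have ht₀0 : u t₀ = 0 := ht₀S.2
    have ht₀b' : t₀ < b' := by
      rcases lt_or_eq_of_le ht₀S.1.2 with h | h
      · exact h
      · exfalso; rw [h, hb'val] at ht₀0; linarith
    -- u > 0 on (t₀, b']
    have hup0 : ∀ s ∈ Ioc t₀ b', 0 < u s := by
      intro s hs
      rcases lt_trichotomy (u s) 0 with h | h | h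
      · exfalso
        have h01 : (0:ℝ) ∈ Icc (u s) (u b') := ⟨le_of_lt h, by rw [hb'val]; exact le_of_lt hb⟩
        obtain ⟨z, hz, hz0⟩ := intermediate_value_Icc hs.2 hcu.continuousOn h01
        have hzS : z ∈ S := ⟨⟨le_trans (le_trans ht₀S.1.1 (le_of_lt hs.1)) hz.1, hz.2⟩, hz0⟩
        have := ht₀max hzS
        have : t₀ < z := lt_of_lt_of_le hs.1 hz.1
        linarith [ht₀max hzS]
      · exfalso
        have hsS : s ∈ S := ⟨⟨le_trans ht₀S.1.1 (le_of_lt hs.1), hs.2⟩, h⟩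
        linarith [ht₀max hsS, hs.1]
      · exact h
    -- the derivative at t₀ is nonnegative
    have hd0 : 0 ≤ deriv u t₀ := by
      have hd : HasDerivAt u (deriv u t₀) t₀ := (hu t₀).hasDerivAt
      have hts := hasDerivAt_iff_tendsto_slope.mp hd
      have h2 : Tendsto (slope u t₀) (𝓝[>] t₀) (𝓝 (deriv u t₀)) :=
        hts.mono_left (nhdsWithin_mono _ (fun x hx => ne_of_gt hx))
      refine ge_of_tendsto h2 ?_
      filter_upwards [Ioc_mem_nhdsGT ht₀b'] with x hx
      rw [slope_def_field, ht₀0, sub_zero]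
      exact div_nonneg (le_of_lt (hup0 x hx)) (le_of_lt (sub_pos.mpr hx.1))
    -- but w t₀ < 0 gives deriv u t₀ < 0
    have : w t₀ = deriv u t₀ := by simp [hw, ht₀0]
    linarith [hwneg t₀]
  · -- w ≡ 0 : u monotone and periodic, hence constant, hence 0
    have hwz : ∀ t, w t = 0 := fun t => by rw [hwval t, hw0]; ring
    have hmono : Monotone u := by
      apply monotone_of_deriv_nonneg hu
      intro x
      have := hwz x
      simp only [hw] at this
      nlinarith [sq_nonneg (u x)]
    have hconst : ∀ t, u t = u 0 := by
      intro t
      obtain ⟨n, hn⟩ := exists_nat_ge (|t| / p)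
      have hnp : |t| ≤ n * p := by rw [div_le_iff₀ hp] at hn; linarith
      have h1 : u t ≤ u (n * p) := hmono (le_trans (le_abs_self t) hnp)
      have h2 : u (-(n * p)) ≤ u t := hmono (by
        have := neg_abs_le t; linarith)
      have h3 : u ((n:ℝ) * p) = u 0 := (hPer.nat_mul n).eq
      have h4 : u (-((n:ℝ) * p)) = u 0 := by
        have := (hPer.nat_mul n) (-((n:ℝ) * p))
        simpa using this.symm
      rw [h3] at h1; rw [h4] at h2
      linarith
    have hu0 : u 0 = 0 := by
      have hcu0 : u = fun _ => u 0 := funext hconst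
      have hder : deriv u 0 = 0 := by rw [hcu0]; simp
      have h5 := hwz 0
      simp only [hw, hder] at h5
      have h6 : k * u 0 ^ 2 = 0 := by linarith
      have h7 : u 0 ^ 2 = 0 := by
        rcases mul_eq_zero.mp h6 with h | h
        · exact absurd h (ne_of_gt hk0)
        · exact h
      exact pow_eq_zero_iff two_ne_zero |>.mp h7
    intro t; rw [hconst t, hu0]
  · -- w > 0 everywhere: u strictly increasing, contradiction with periodicity
    exfalso
    have hwpos : ∀ t, 0 < w t := fun t => by
      rw [hwval t]; exact mul_pos hw0 (Real.exp_pos _)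
    have hmono : StrictMono u := by
      apply strictMono_of_deriv_pos
      intro x
      have := hwpos x
      simp only [hw] at this
      nlinarith [sq_nonneg (u x)]
    have := hmono (show (0:ℝ) < p from hp)
    rw [show u p = u 0 by simpa using hperiod 0] at this
    exact lt_irrefl _ this
end
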